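/- For the Ising model with interaction matrix J and zero external fields on vertex set V = {1,…,n}, and for any fixed configurations σ, σ' ∈ {−1,+1}^V, the probability distribution γ(Λ | σ,σ') ∝ μ(σ_Λ σ'_{Λᶜ}) μ(σ'_Λ σ_{Λᶜ}) over subsets Λ ⊆ V, when identified with a distribution over spin configurations η ∈ {−1,+1}^V via η_x = +1 ⟺ x ∈ Λ, equals the Ising Gibbs measure with zero fields and interaction matrix J̃ given by J̃_{xy} = 2 J_{xy} σ_x σ_y 1[σ_x ≠ σ'_x] 1[σ_y ≠ σ'_y]; that is, γ(η|σ,σ') ∝ exp{(1/2) ∑_{x,y} J̃_{xy} η_x η_y}. -/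
import Mathlib


/-- The ±1 spin value of a Boolean. -/
def spin (b : Bool) : ℝ := if b then 1 else -1

/-- Unnormalized Ising weight with interaction J and external fields h. -/
noncomputable def isingWeight {n : ℕ} (J : Fin n → Fin n → ℝ) (h : Fin n → ℝ)
    (σ : Fin n → Bool) : ℝ :=
  Real.exp ((1 / 2) * ∑ x, ∑ y, J x y * spin (σ x) * spin (σ y)
      + ∑ x, h x * spin (σ x))

/-- Ising Gibbs measure with interaction J and external fields h. -/
noncomputable def isingGibbs {n : ℕ} (J : Fin n → Fin n → ℝ) (h : Fin n → ℝ)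
    (σ : Fin n → Bool) : ℝ :=
  isingWeight J h σ / ∑ τ, isingWeight J h τ

/-- The configuration equal to σ on Λ and to σ' off Λ. -/
def mix {n : ℕ} (Λ : Finset (Fin n)) (σ σ' : Fin n → Bool) : Fin n → Bool :=
  fun x => if x ∈ Λ then σ x else σ'  x

lemma pointwise (Jxy : ℝ) (p q : Prop) [Decidable p] [Decidable q] (a a' b b' : Bool) :
    Jxy * spin (if p then a else a') * spin (if q then b else b')
      + Jxy * spin (if p then a' else a) * spin (if q then b' else b)
    = (2 * Jxy * spin a * spin b * (if a ≠ a' then (1 : ℝ) else 0)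
        * (if b ≠ b' then (1 : ℝ) else 0))
        * (if p then (1 : ℝ) else -1) * (if q then (1 : ℝ) else -1)
      + Jxy * (spin a + spin a') * (spin b + spin b') / 2 := by
  by_cases hp : p <;> by_cases hq : q <;>
    cases a <;> cases a' <;> cases b <;> cases b' <;>
    simp [spin, hp, hq] <;> ring

/-- the distribution γ(Λ|σ,σ') ∝ μ(σ_Λσ'_{Λᶜ})μ(σ'_Λσ_{Λᶜ}),
viewed as a distribution over η ∈ {±1}^V via η_x = +1 ⟺ x ∈ Λ, is the
zero-field Ising Gibbs measure with interactions
J̃_{xy} = 2 J_{xy} σ_x σ_y 1[σ_x ≠ σ'_x] 1[σ_y ≠ σ'_y]. -/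
theorem gamma_is_ising {n : ℕ} (J : Fin n → Fin n → ℝ)
    (hJsym : ∀ x y, J x y = J y x) (σ σ' : Fin n → Bool) :
    ∃ c : ℝ, 0 < c ∧ ∀ Λ : Finset (Fin n),
      isingGibbs J (fun _ => 0) (mix Λ σ σ') * isingGibbs J (fun _ => 0) (mix Λ σ' σ)
        = c * Real.exp ((1 / 2) * ∑ x, ∑ y,
            (2 * J x y * spin (σ x) * spin (σ y)
              * (if σ x ≠ σ' x then (1 : ℝ) else 0)
              * (if σ y ≠ σ' y then (1 : ℝ) else 0))
            * (if x ∈ Λ then (1 : ℝ) else -1) * (if y ∈ Λ then (1 : ℝ) else -1)) := by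
  set Z : ℝ := ∑ τ, isingWeight J (fun _ => 0) τ with hZdef
  have hZ : 0 < Z :=
    Finset.sum_pos (fun τ _ => Real.exp_pos _) Finset.univ_nonempty
  set K : ℝ := (1 / 2) * ∑ x, ∑ y,
      J x y * (spin (σ x) + spin (σ' x)) * (spin (σ y) + spin (σ' y)) / 2 with hK
  refine ⟨Real.exp K / (Z * Z), by positivity, fun Λ => ?_⟩
  have hw : ∀ τ : Fin n → Bool, isingWeight J (fun _ => 0) τ
      = Real.exp ((1 / 2) * ∑ x, ∑ y, J x y * spin (τ x) * spin (τ y)) := by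
    intro τ; simp [isingWeight]
  have hsum :
      (∑ x, ∑ y, J x y * spin (mix Λ σ σ' x) * spin (mix Λ σ σ' y))
        + (∑ x, ∑ y, J x y * spin (mix Λ σ' σ x) * spin (mix Λ σ' σ y))
      = (∑ x, ∑ y, (2 * J x y * spin (σ x) * spin (σ y)
            * (if σ x ≠ σ' x then (1 : ℝ) else 0)
            * (if σ y ≠ σ' y then (1 : ℝ) else 0))
            * (if x ∈ Λ then (1 : ℝ) else -1) * (if y ∈ Λ then (1 : ℝ) else -1))
        + ∑ x, ∑ y, J x y * (spin (σ x) + spin (σ' x)) * (spin (σ y) + spin (σ' y)) / 2 := by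
    rw [← Finset.sum_add_distrib, ← Finset.sum_add_distrib]
    refine Finset.sum_congr rfl fun x _ => ?_
    rw [← Finset.sum_add_distrib, ← Finset.sum_add_distrib]
    refine Finset.sum_congr rfl fun y _ => ?_
    simpa [mix] using pointwise (J x y) (x ∈ Λ) (y ∈ Λ) (σ x) (σ' x) (σ y) (σ' y)
  have hA : (1 / 2) * (∑ x, ∑ y, J x y * spin (mix Λ σ σ' x) * spin (mix Λ σ σ' y))
        + (1 / 2) * (∑ x, ∑ y, J x y * spin (mix Λ σ' σ x) * spin (mix Λ σ' σ y))
      = K + (1 / 2) * ∑ x, ∑ y, (2 * J x y * spin (σ x) * spin (σ y)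
            * (if σ x ≠ σ' x then (1 : ℝ) else 0)
            * (if σ y ≠ σ' y then (1 : ℝ) else 0))
            * (if x ∈ Λ then (1 : ℝ) else -1) * (if y ∈ Λ then (1 : ℝ) else -1) := by
    rw [hK]; linarith [hsum]
  rw [isingGibbs, isingGibbs, ← hZdef, div_mul_div_comm, hw, hw, ← Real.exp_add, hA,
    Real.exp_add]
  ring
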